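/- (Main theorem, direction 2.) Let ε < 3/2, let P be a classification context with k = |Ψ_P| classes, and suppose there exists a classifier C satisfying ε-fair treatment and ε/5-rational fairness with respect to P. Then P is 4(k−1)ε-trivial: there is a partition Ψ_1,...,Ψ_m of Ψ_P such that (1) for all i, all c ∈ Ψ_i, and all groups X,Y, μ(Pr[f(σ_X)=c | f(σ_X)∈Ψ_i], Pr[f(σ_Y)=c | f(σ_Y)∈Ψ_i]) ≤ 4(k−1)ε, and (2) for i ≠ j, {O(σ) | f(σ)∈Ψ_i} and {O(σ) | f(σ)∈Ψ_j} have disjoint support. -/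

import Mathlib

open scoped Classical
open Finset

/-- Multiplicative distance between nonnegative reals, valued in `ℝ≥0∞`. -/
noncomputable def mdist (x y : ℝ) : ENNReal :=
  if x = 0 ∧ y = 0 then 0
  else if 0 < x ∧ 0 < y then ENNReal.ofReal (Real.log (max (x / y) (y / x)))
  else ⊤

/-- Probability of an event `E` under a finitely supported distribution `D`. -/
noncomputable def pr {S : Type} [Fintype S] (D : S → ℝ) (E : S → Prop) : ℝ :=
  ∑ σ, if E σ then D σ else 0

/-- Conditional probability `Pr[A | B]`, with the convention that it is `0`
when `Pr[B] = 0` (division by zero). -/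
noncomputable def cpr {S : Type} [Fintype S] (D : S → ℝ) (A B : S → Prop) : ℝ :=
  pr D (fun σ => A σ ∧ B σ) / pr D B

/-- `D` is a probability mass function. -/
def IsProb {S : Type} [Fintype S] (D : S → ℝ) : Prop :=
  (∀ σ, 0 ≤ D σ) ∧ ∑ σ, D σ = 1

/-- `ε`-fair treatment: conditioned on each class, the classifier's outcome
distribution is `ε`-close (multiplicatively) between any two groups. -/
def FairTreatment {S Ψ G Θ Ω : Type} [Fintype S] (D : S → ℝ) (f : S → Ψ) (g : S → G)
    (O : S → Θ) (C : Θ → Ω) (ε : ℝ) : Prop :=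
  ∀ (X Y : G) (c : Ψ) (o : Ω),
    mdist (cpr D (fun σ => C (O σ) = o) (fun σ => f σ = c ∧ g σ = X))
          (cpr D (fun σ => C (O σ) = o) (fun σ => f σ = c ∧ g σ = Y)) ≤ ENNReal.ofReal ε

/-- `ε`-predictive parity: conditioned on each outcome, the class distribution
is `ε`-close (multiplicatively) between any two groups. -/
def PredParity {S Ψ G Θ Ω : Type} [Fintype S] (D : S → ℝ) (f : S → Ψ) (g : S → G)
    (O : S → Θ) (C : Θ → Ω) (ε : ℝ) : Prop :=
  ∀ (X Y : G) (o : Ω) (c : Ψ),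
    mdist (cpr D (fun σ => f σ = c) (fun σ => C (O σ) = o ∧ g σ = X))
          (cpr D (fun σ => f σ = c) (fun σ => C (O σ) = o ∧ g σ = Y)) ≤ ENNReal.ofReal ε

/-- Expected utility of a mixed action `d` (a distribution over actions),
conditioned on the event `B`. -/
noncomputable def EU {S Ψ A : Type} [Fintype S] [Fintype Ψ] [Fintype A]
    (D : S → ℝ) (f : S → Ψ) (u : Ψ → A → ℝ) (B : S → Prop) (d : A → ℝ) : ℝ :=
  ∑ a, d a * ∑ y, cpr D (fun σ => f σ = y) B * u y a

/-- `δ`-rational fairness: for every finite action space and `[0,1]`-valued utility,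
there is a fair (group-independent, possibly mixed) strategy that is a
`δ`-approximate Nash equilibrium of the induced Bayesian decision game. -/
def RatFair {S Ψ G Θ Ω : Type} [Fintype S] [Fintype Ψ] [Fintype G] [Fintype Ω]
    (D : S → ℝ) (f : S → Ψ) (g : S → G) (O : S → Θ) (C : Θ → Ω) (δ : ℝ) : Prop :=
  ∀ (A : Type) [Fintype A] (u : Ψ → A → ℝ), (∀ y a, 0 ≤ u y a ∧ u y a ≤ 1) →
    ∃ s : G → Ω → A → ℝ,
      (∀ X o, (∀ a, 0 ≤ s X o a) ∧ ∑ a, s X o a = 1) ∧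
      (∀ X Y o, s X o = s Y o) ∧
      (∀ X o, 0 < pr D (fun σ => g σ = X ∧ C (O σ) = o) →
        ∀ d : A → ℝ, (∀ a, 0 ≤ d a) → (∑ a, d a = 1) →
          EU D f u (fun σ => g σ = X ∧ C (O σ) = o) d ≤
            Real.exp δ * EU D f u (fun σ => g σ = X ∧ C (O σ) = o) (s X o))

section Aux

variable {S : Type} [Fintype S]

lemma pr_nonneg (D : S → ℝ) (hD : ∀ σ, 0 ≤ D σ) (E : S → Prop) : 0 ≤ pr D E :=
  Finset.sum_nonneg fun σ _ => by by_cases h : E σ <;> simp [h, hD σ]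

lemma pr_congr (D : S → ℝ) {A B : S → Prop} (h : ∀ σ, A σ ↔ B σ) : pr D A = pr D B :=
  Finset.sum_congr rfl fun σ _ => if_congr (h σ) rfl rfl

lemma pr_mono (D : S → ℝ) (hD : ∀ σ, 0 ≤ D σ) {A B : S → Prop} (h : ∀ σ, A σ → B σ) :
    pr D A ≤ pr D B := by
  apply Finset.sum_le_sum
  intro σ _
  by_cases hA : A σ
  · simp [hA, h σ hA]
  · by_cases hB : B σ <;> simp [hA, hB, hD σ]

lemma pr_pos (D : S → ℝ) (hD : ∀ σ, 0 ≤ D σ) {E : S → Prop} (σ : S) (h1 : 0 < D σ)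
    (h2 : E σ) : 0 < pr D E := by
  have : (if E σ then D σ else 0) ≤ pr D E := by
    apply Finset.single_le_sum (f := fun σ => if E σ then D σ else 0) _ (mem_univ σ)
    intro τ _
    by_cases h : E τ <;> simp [h, hD τ]
  rw [if_pos h2] at this
  linarith

lemma cpr_nonneg (D : S → ℝ) (hD : ∀ σ, 0 ≤ D σ) (A B : S → Prop) : 0 ≤ cpr D A B :=
  div_nonneg (pr_nonneg D hD _) (pr_nonneg D hD _)

lemma cpr_le_one (D : S → ℝ) (hD : ∀ σ, 0 ≤ D σ) (A B : S → Prop) : cpr D A B ≤ 1 :=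
  div_le_one_of_le₀ (pr_mono D hD fun σ h => h.2) (pr_nonneg D hD _)

lemma pr_fiber_sum {Ψ : Type} [Fintype Ψ] (D : S → ℝ) (f : S → Ψ) (B : S → Prop) :
    ∑ y : Ψ, pr D (fun σ => f σ = y ∧ B σ) = pr D B := by
  unfold pr
  rw [Finset.sum_comm]
  apply Finset.sum_congr rfl
  intro σ _
  by_cases hB : B σ
  · simp only [hB, and_true, if_pos]
    rw [Finset.sum_ite_eq univ (f σ) (fun _ => D σ)]
    simp
  · simp [hB]

lemma sum_cpr {Ψ : Type} [Fintype Ψ] (D : S → ℝ) (f : S → Ψ) {B : S → Prop}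
    (hB : 0 < pr D B) : ∑ y : Ψ, cpr D (fun σ => f σ = y) B = 1 := by
  unfold cpr
  rw [← Finset.sum_div, pr_fiber_sum, div_self hB.ne']

lemma mdist_le_of_bounds {x y K : ℝ} (hx : 0 < x) (hy : 0 < y)
    (hxy : x ≤ Real.exp K * y) (hyx : y ≤ Real.exp K * x) :
    mdist x y ≤ ENNReal.ofReal K := by
  unfold mdist
  rw [if_neg (by rintro ⟨h, -⟩; exact hx.ne' h), if_pos ⟨hx, hy⟩]
  apply ENNReal.ofReal_le_ofReal
  have h1 : x / y ≤ Real.exp K := (div_le_iff₀ hy).2 (by linarith)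
  have h2 : y / x ≤ Real.exp K := (div_le_iff₀ hx).2 (by linarith)
  have hmax : 0 < max (x / y) (y / x) :=
    lt_of_lt_of_le (div_pos hx hy) (le_max_left _ _)
  rw [Real.log_le_iff_le_exp hmax]
  exact max_le h1 h2

lemma bounds_of_mdist_le {x y ε : ℝ} (hx : 0 < x) (hy0 : 0 ≤ y) (hε : 0 ≤ ε)
    (h : mdist x y ≤ ENNReal.ofReal ε) :
    0 < y ∧ x ≤ Real.exp ε * y ∧ y ≤ Real.exp ε * x := by
  unfold mdist at h
  rcases hy0.lt_or_eq with hy | hy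
  · refine ⟨hy, ?_, ?_⟩ <;>
    · rw [if_neg (by rintro ⟨h1, -⟩; exact hx.ne' h1), if_pos ⟨hx, hy⟩] at h
      have hlog := (ENNReal.ofReal_le_ofReal_iff hε).1 h
      have hmax : 0 < max (x / y) (y / x) :=
        lt_of_lt_of_le (div_pos hx hy) (le_max_left _ _)
      rw [Real.log_le_iff_le_exp hmax] at hlog
      have h1 : x / y ≤ Real.exp ε := le_trans (le_max_left _ _) hlog
      have h2 : y / x ≤ Real.exp ε := le_trans (le_max_right _ _) hlog
      rw [div_le_iff₀ hy] at h1
      rw [div_le_iff₀ hx] at h2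
      linarith
  · exfalso
    rw [if_neg (by rintro ⟨h1, -⟩; exact hx.ne' h1), if_neg (by rintro ⟨-, h2⟩; exact h2.ne' hy.symm)] at h
    exact absurd (top_le_iff.1 h) ENNReal.ofReal_ne_top

lemma exp_key {ε : ℝ} (h0 : 0 ≤ ε) (h1 : ε < 3 / 2) :
    Real.exp (ε / 5) + Real.exp (-(3 * ε / 10)) ≤ 2 := by
  set x := Real.exp (ε / 10) with hxdef
  have hx0 : 0 < x := Real.exp_pos _
  have hx1 : 1 ≤ x := Real.one_le_exp (by linarith)
  have hx2 : x ≤ 20 / 17 := by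
    have h4 : 1 - ε / 10 ≤ Real.exp (-(ε / 10)) := by
      have := Real.add_one_le_exp (-(ε / 10)); linarith
    have h5 : Real.exp (-(ε / 10)) * x = 1 := by
      rw [hxdef, ← Real.exp_add]; norm_num
    nlinarith
  have hE : x * x = Real.exp (ε / 5) := by
    rw [hxdef, ← Real.exp_add]; congr 1; ring
  have hq : Real.exp (-(3 * ε / 10)) * x ^ 3 = 1 := by
    rw [hxdef, show Real.exp (ε/10) ^ 3 = Real.exp (ε/10) * (Real.exp (ε/10) * Real.exp (ε/10)) by ring,
      ← Real.exp_add, ← Real.exp_add, ← Real.exp_add,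
      show -(3 * ε / 10) + (ε / 10 + (ε / 10 + ε / 10)) = 0 by ring, Real.exp_zero]
  have fx2 : x ^ 2 ≤ 400 / 289 := by nlinarith
  have f1 : x ^ 3 ≤ (20 / 17) * x ^ 2 := by nlinarith [sq_nonneg x]
  have f2 : x ^ 4 ≤ (400 / 289) * x ^ 2 := by nlinarith [sq_nonneg x]
  have f3 : (289 / 400) * x ^ 2 ≤ 1 := by nlinarith
  have f4 : (17 / 20) * x ^ 2 ≤ x := by nlinarith
  have hg : 0 ≤ 1 + x + x ^ 2 - x ^ 3 - x ^ 4 := by linarith [sq_nonneg x]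
  have hpoly : x ^ 5 + 1 ≤ 2 * x ^ 3 := by
    nlinarith [mul_nonneg (by linarith : (0:ℝ) ≤ x - 1) hg]
  have hfin : (Real.exp (ε / 5) + Real.exp (-(3 * ε / 10))) * x ^ 3 ≤ 2 * x ^ 3 := by
    nlinarith [hq, hpoly, hE]
  exact le_of_mul_le_mul_right hfin (pow_pos hx0 3)

end Aux


set_option maxHeartbeats 1000000 in
lemma pp_core {ε pX pY t a b : ℝ} (hε0 : 0 ≤ ε) (hε : ε < 3 / 2)
    (hpX : 0 < pX) (hpY : 0 < pY) (ht0 : 0 < t) (ht2 : t ^ 2 = pX * pY)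
    (hcon : Real.exp ε * pX < pY)
    (ha0 : 0 ≤ a) (hb0 : 0 ≤ b) (hab : a + b = 1)
    (hiX : t ≤ Real.exp (ε / 5) * (a * pX + b * t))
    (hiY : pY ≤ Real.exp (ε / 5) * (a * pY + b * t)) : False := by
  set E := Real.exp (ε / 5) with hEdef
  set q := Real.exp (-(3 * ε / 10)) with hqdef
  have hE0 : 0 < E := Real.exp_pos _
  have hE1 : 1 ≤ E := Real.one_le_exp (by linarith)
  have hq0 : 0 < q := Real.exp_pos _
  have hq1 : q ≤ 1 := Real.exp_le_one_iff.2 (by linarith)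
  have hqE : q * q * Real.exp ε = E * E := by
    rw [hqdef, hEdef, ← Real.exp_add, ← Real.exp_add, ← Real.exp_add]
    congr 1; ring
  have hA : E * pX < q * t := by
    have e1 : q * q * t ^ 2 = q * q * (pX * pY) := by rw [ht2]
    have e2 : (q * q * Real.exp ε) * (pX * pX) = (E * E) * (pX * pX) := by rw [hqE]
    have e3 : q * q * pX * (Real.exp ε * pX) < q * q * pX * pY :=
      mul_lt_mul_of_pos_left hcon (by positivity)
    have h2 : (E * pX) ^ 2 < (q * t) ^ 2 := by nlinarith [e1, e2, e3]
    exact lt_of_pow_lt_pow_left₀ 2 (by positivity) h2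
  have hB : E * t < q * pY := by
    have e1 : E * E * t ^ 2 = E * E * (pX * pY) := by rw [ht2]
    have e2 : (q * q * Real.exp ε) * (pX * pY) = (E * E) * (pX * pY) := by rw [hqE]
    have e3 : q * q * pY * (Real.exp ε * pX) < q * q * pY * pY :=
      mul_lt_mul_of_pos_left hcon (by positivity)
    have h2 : (E * t) ^ 2 < (q * pY) ^ 2 := by nlinarith [e1, e2, e3]
    exact lt_of_pow_lt_pow_left₀ 2 (by positivity) h2
  rcases hb0.lt_or_eq with hb | hb
  · -- 0 < b
    have h1 : 1 ≤ q * a + E * b := by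
      have hstep : t ≤ a * (q * t) + E * b * t := by
        nlinarith [hiX, mul_le_mul_of_nonneg_left hA.le ha0]
      nlinarith [ht0, hstep]
    have h2 : 1 < E * a + q * b := by
      have hstep : pY < a * (E * pY) + b * (q * pY) := by
        nlinarith [hiY, mul_lt_mul_of_pos_left hB hb]
      nlinarith [hpY, hstep]
    have hkey := exp_key hε0 hε
    rw [← hEdef, ← hqdef] at hkey
    have hEab : E * a + E * b = E := by rw [← mul_add, hab, mul_one]
    have hqab : q * a + q * b = q := by rw [← mul_add, hab, mul_one]
    linarith
  · -- b = 0, a = 1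
    have ha1 : a = 1 := by linarith
    rw [ha1, ← hb] at hiX
    have h3 : t ≤ E * (1 * pX + 0 * t) := hiX
    have h4 : q * t ≤ 1 * t := mul_le_mul_of_nonneg_right hq1 ht0.le
    linarith [h3, h4, hA]

section PP

variable {S Ψ G Θ Ω : Type} [Fintype S] [Fintype Ψ] [Fintype G] [Fintype Ω]

lemma pp_lemma (D : S → ℝ) (hD : IsProb D) (f : S → Ψ) (g : S → G) (O : S → Θ) (C : Θ → Ω)
    {ε : ℝ} (hε0 : 0 ≤ ε) (hε : ε < 3 / 2) (hrf : RatFair D f g O C (ε / 5))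
    (X Y : G) (o : Ω) (c : Ψ)
    (hX : 0 < pr D (fun σ => g σ = X ∧ C (O σ) = o))
    (hY : 0 < pr D (fun σ => g σ = Y ∧ C (O σ) = o))
    (hpX : 0 < cpr D (fun σ => f σ = c) (fun σ => g σ = X ∧ C (O σ) = o)) :
    cpr D (fun σ => f σ = c) (fun σ => g σ = Y ∧ C (O σ) = o)
      ≤ Real.exp ε * cpr D (fun σ => f σ = c) (fun σ => g σ = X ∧ C (O σ) = o) := by
  obtain ⟨hDnn, -⟩ := hD
  by_contra hcon
  push_neg at hcon
  set pX := cpr D (fun σ => f σ = c) (fun σ => g σ = X ∧ C (O σ) = o) with hpXdef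
  set pY := cpr D (fun σ => f σ = c) (fun σ => g σ = Y ∧ C (O σ) = o) with hpYdef
  have hpX1 : pX ≤ 1 := cpr_le_one D hDnn _ _
  have hpY1 : pY ≤ 1 := cpr_le_one D hDnn _ _
  have hpY : 0 < pY := lt_trans (by positivity) hcon
  set t := Real.sqrt (pX * pY) with htdef
  have ht0 : 0 < t := Real.sqrt_pos.2 (mul_pos hpX hpY)
  have ht2 : t ^ 2 = pX * pY := Real.sq_sqrt (mul_pos hpX hpY).le
  have ht1 : t ≤ 1 := by
    rw [show (1:ℝ) = Real.sqrt 1 by simp [Real.sqrt_one]]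
    exact Real.sqrt_le_sqrt (by nlinarith)
  clear_value pX pY t
  obtain ⟨s, hs1, hs2, hs3⟩ := hrf Bool (fun y b => if b then (if y = c then 1 else 0) else t)
    (by
      intro y b
      cases b
      · exact ⟨ht0.le, ht1⟩
      · show (0 ≤ if y = c then (1:ℝ) else 0) ∧ (if y = c then (1:ℝ) else 0) ≤ 1
        split <;> norm_num)
  set a := s X o true with hadef
  set b := s X o false with hbdef
  have ha0 : 0 ≤ a := (hs1 X o).1 true
  have hb0 : 0 ≤ b := (hs1 X o).1 false
  have hab : a + b = 1 := by
    have := (hs1 X o).2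
    rwa [Fintype.sum_bool] at this
  have hEU : ∀ (Z : G), 0 < pr D (fun σ => g σ = Z ∧ C (O σ) = o) → ∀ d : Bool → ℝ,
      EU D f (fun y b => if b then (if y = c then 1 else 0) else t)
        (fun σ => g σ = Z ∧ C (O σ) = o) d
      = d true * cpr D (fun σ => f σ = c) (fun σ => g σ = Z ∧ C (O σ) = o) + d false * t := by
    intro Z hZ d
    unfold EU
    rw [Fintype.sum_bool]
    show d true * (∑ y, cpr D (fun σ => f σ = y) (fun σ => g σ = Z ∧ C (O σ) = o) *
        (if y = c then (1:ℝ) else 0)) +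
      d false * (∑ y, cpr D (fun σ => f σ = y) (fun σ => g σ = Z ∧ C (O σ) = o) * t) = _
    congr 1
    · congr 1
      rw [show (∑ y, cpr D (fun σ => f σ = y) (fun σ => g σ = Z ∧ C (O σ) = o) *
          (if y = c then (1:ℝ) else 0))
        = ∑ y, (if y = c then cpr D (fun σ => f σ = y) (fun σ => g σ = Z ∧ C (O σ) = o) else 0)
        from Finset.sum_congr rfl fun y _ => by split <;> simp]
      rw [Finset.sum_ite_eq' univ c]
      simp
    · congr 1
      rw [← Finset.sum_mul, sum_cpr D f hZ, one_mul]
  have hiX : t ≤ Real.exp (ε / 5) * (a * pX + b * t) := by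
    have h := hs3 X o hX (fun b => if b then 0 else 1) (by intro b; cases b <;> norm_num)
      (by rw [Fintype.sum_bool]; norm_num)
    rw [hEU X hX, hEU X hX, ← hpXdef] at h
    show t ≤ Real.exp (ε / 5) * (s X o true * pX + s X o false * t)
    calc t = (0:ℝ) * pX + 1 * t := by ring
    _ ≤ _ := h
  have hiY : pY ≤ Real.exp (ε / 5) * (a * pY + b * t) := by
    have h := hs3 Y o hY (fun b => if b then 1 else 0) (by intro b; cases b <;> norm_num)
      (by rw [Fintype.sum_bool]; norm_num)
    rw [hs2 Y X o, hEU Y hY, hEU Y hY, ← hpYdef] at h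
    show pY ≤ Real.exp (ε / 5) * (s X o true * pY + s X o false * t)
    calc pY = (1:ℝ) * pY + 0 * t := by ring
    _ ≤ _ := h
  exact pp_core hε0 hε hpX hpY ht0 ht2 hcon ha0 hb0 hab hiX hiY

end PP

def LinkRel {S Ψ Θ : Type} [Fintype S] (D : S → ℝ) (f : S → Ψ) (O : S → Θ) : Ψ → Ψ → Prop :=
  fun x y => ∃ σ σ', 0 < D σ ∧ 0 < D σ' ∧ f σ = x ∧ f σ' = y ∧ O σ = O σ'

section Main

variable {S Ψ G Θ Ω : Type} [Fintype S] [Fintype Ψ] [Fintype G] [Fintype Ω]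

lemma ft_pos (D : S → ℝ) (hDnn : ∀ σ, 0 ≤ D σ) (f : S → Ψ) (g : S → G) (O : S → Θ) (C : Θ → Ω)
    {ε : ℝ} (hε0 : 0 ≤ ε) (hft : FairTreatment D f g O C ε)
    {c : Ψ} {o : Ω} {σ0 : S} (h0 : 0 < D σ0) (hf0 : f σ0 = c) (ho : C (O σ0) = o) (Z : G) :
    0 < pr D (fun σ => C (O σ) = o ∧ (f σ = c ∧ g σ = Z)) := by
  have hden0 : 0 < pr D (fun σ => f σ = c ∧ g σ = g σ0) := pr_pos D hDnn σ0 h0 ⟨hf0, rfl⟩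
  have hnum0 : 0 < pr D (fun σ => C (O σ) = o ∧ (f σ = c ∧ g σ = g σ0)) :=
    pr_pos D hDnn σ0 h0 ⟨ho, hf0, rfl⟩
  have hb0 : 0 < cpr D (fun σ => C (O σ) = o) (fun σ => f σ = c ∧ g σ = g σ0) :=
    div_pos hnum0 hden0
  have hmd := hft (g σ0) Z c o
  obtain ⟨hpos, -, -⟩ := bounds_of_mdist_le hb0 (cpr_nonneg D hDnn _ _) hε0 hmd
  by_contra hle
  push_neg at hle
  have h0' : pr D (fun σ => C (O σ) = o ∧ (f σ = c ∧ g σ = Z)) = 0 :=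
    le_antisymm hle (pr_nonneg D hDnn _)
  unfold cpr at hpos
  rw [h0', zero_div] at hpos
  exact lt_irrefl 0 hpos

lemma supp_N_pos (D : S → ℝ) (hDnn : ∀ σ, 0 ≤ D σ) (f : S → Ψ) (g : S → G) (O : S → Θ)
    (C : Θ → Ω) {ε : ℝ} (hε0 : 0 ≤ ε) (hft : FairTreatment D f g O C ε)
    {x : Ψ} (hs : ∃ σ, 0 < D σ ∧ f σ = x) (Z : G) :
    0 < pr D (fun σ => f σ = x ∧ g σ = Z) := by
  obtain ⟨σ0, h0, hf0⟩ := hs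
  exact lt_of_lt_of_le (ft_pos D hDnn f g O C hε0 hft h0 hf0 rfl Z)
    (pr_mono D hDnn fun σ h => h.2)

set_option maxHeartbeats 1000000 in
lemma edge_bound (D : S → ℝ) (hD : IsProb D) (f : S → Ψ) (g : S → G) (O : S → Θ) (C : Θ → Ω)
    {ε : ℝ} (hε0 : 0 ≤ ε) (hε : ε < 3 / 2)
    (hft : FairTreatment D f g O C ε) (hrf : RatFair D f g O C (ε / 5))
    {x y : Ψ} (hxy : LinkRel D f O x y) (X Y : G) :
    pr D (fun σ => f σ = x ∧ g σ = X) * pr D (fun σ => f σ = y ∧ g σ = Y)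
      ≤ Real.exp (4 * ε) *
        (pr D (fun σ => f σ = x ∧ g σ = Y) * pr D (fun σ => f σ = y ∧ g σ = X)) := by
  have hDnn := hD.1
  obtain ⟨σ1, σ2, h1, h2, hf1, hf2, hO⟩ := hxy
  set o := C (O σ1) with hodef
  have ho2 : C (O σ2) = o := by rw [hodef, hO]
  have main : ∀ (w : Ψ), (∃ σw, 0 < D σw ∧ f σw = w ∧ C (O σw) = o) → ∀ Z : G,
      0 < pr D (fun σ => f σ = w ∧ g σ = Z) ∧
      0 < cpr D (fun σ => C (O σ) = o) (fun σ => f σ = w ∧ g σ = Z) ∧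
      0 < pr D (fun σ => g σ = Z ∧ C (O σ) = o) ∧
      0 < cpr D (fun σ => f σ = w) (fun σ => g σ = Z ∧ C (O σ) = o) ∧
      pr D (fun σ => f σ = w ∧ g σ = Z) *
          cpr D (fun σ => C (O σ) = o) (fun σ => f σ = w ∧ g σ = Z)
        = cpr D (fun σ => f σ = w) (fun σ => g σ = Z ∧ C (O σ) = o) *
            pr D (fun σ => g σ = Z ∧ C (O σ) = o) := by
    rintro w ⟨σw, hw, hfw, how⟩ Z
    have hnum : 0 < pr D (fun σ => C (O σ) = o ∧ (f σ = w ∧ g σ = Z)) :=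
      ft_pos D hDnn f g O C hε0 hft hw hfw how Z
    have hN : 0 < pr D (fun σ => f σ = w ∧ g σ = Z) :=
      lt_of_lt_of_le hnum (pr_mono D hDnn fun σ h => h.2)
    have hM : 0 < pr D (fun σ => g σ = Z ∧ C (O σ) = o) :=
      lt_of_lt_of_le hnum (pr_mono D hDnn fun σ h => ⟨h.2.2, h.1⟩)
    have hnum' : pr D (fun σ => f σ = w ∧ (g σ = Z ∧ C (O σ) = o))
        = pr D (fun σ => C (O σ) = o ∧ (f σ = w ∧ g σ = Z)) := pr_congr D (fun σ => by tauto)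
    refine ⟨hN, div_pos hnum hN, hM, ?_, ?_⟩
    · unfold cpr; rw [hnum']; exact div_pos hnum hM
    · unfold cpr
      rw [hnum', mul_comm, div_mul_cancel₀ _ hN.ne', div_mul_cancel₀ _ hM.ne']
  obtain ⟨hNxX, hbxX, hMX, hpxX, hidxX⟩ := main x ⟨σ1, h1, hf1, hodef.symm⟩ X
  obtain ⟨hNxY, hbxY, hMY, hpxY, hidxY⟩ := main x ⟨σ1, h1, hf1, hodef.symm⟩ Y
  obtain ⟨hNyX, hbyX, -, hpyX, hidyX⟩ := main y ⟨σ2, h2, hf2, ho2⟩ X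
  obtain ⟨hNyY, hbyY, -, hpyY, hidyY⟩ := main y ⟨σ2, h2, hf2, ho2⟩ Y
  have hb1 : cpr D (fun σ => C (O σ) = o) (fun σ => f σ = x ∧ g σ = Y)
      ≤ Real.exp ε * cpr D (fun σ => C (O σ) = o) (fun σ => f σ = x ∧ g σ = X) :=
    (bounds_of_mdist_le hbxX (cpr_nonneg D hDnn _ _) hε0 (hft X Y x o)).2.2
  have hb2 : cpr D (fun σ => C (O σ) = o) (fun σ => f σ = y ∧ g σ = X)
      ≤ Real.exp ε * cpr D (fun σ => C (O σ) = o) (fun σ => f σ = y ∧ g σ = Y) :=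
    (bounds_of_mdist_le hbyY (cpr_nonneg D hDnn _ _) hε0 (hft Y X y o)).2.2
  have hp1 : cpr D (fun σ => f σ = x) (fun σ => g σ = X ∧ C (O σ) = o)
      ≤ Real.exp ε * cpr D (fun σ => f σ = x) (fun σ => g σ = Y ∧ C (O σ) = o) :=
    pp_lemma D hD f g O C hε0 hε hrf Y X o x hMY hMX hpxY
  have hp2 : cpr D (fun σ => f σ = y) (fun σ => g σ = Y ∧ C (O σ) = o)
      ≤ Real.exp ε * cpr D (fun σ => f σ = y) (fun σ => g σ = X ∧ C (O σ) = o) :=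
    pp_lemma D hD f g O C hε0 hε hrf X Y o y hMX hMY hpyX
  set nxX := pr D (fun σ => f σ = x ∧ g σ = X)
  set nxY := pr D (fun σ => f σ = x ∧ g σ = Y)
  set nyX := pr D (fun σ => f σ = y ∧ g σ = X)
  set nyY := pr D (fun σ => f σ = y ∧ g σ = Y)
  set bxX := cpr D (fun σ => C (O σ) = o) (fun σ => f σ = x ∧ g σ = X)
  set bxY := cpr D (fun σ => C (O σ) = o) (fun σ => f σ = x ∧ g σ = Y)
  set byX := cpr D (fun σ => C (O σ) = o) (fun σ => f σ = y ∧ g σ = X)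
  set byY := cpr D (fun σ => C (O σ) = o) (fun σ => f σ = y ∧ g σ = Y)
  set pxX := cpr D (fun σ => f σ = x) (fun σ => g σ = X ∧ C (O σ) = o)
  set pxY := cpr D (fun σ => f σ = x) (fun σ => g σ = Y ∧ C (O σ) = o)
  set pyX := cpr D (fun σ => f σ = y) (fun σ => g σ = X ∧ C (O σ) = o)
  set pyY := cpr D (fun σ => f σ = y) (fun σ => g σ = Y ∧ C (O σ) = o)
  set MX := pr D (fun σ => g σ = X ∧ C (O σ) = o)
  set MY := pr D (fun σ => g σ = Y ∧ C (O σ) = o)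
  clear_value nxX nxY nyX nyY bxX bxY byX byY pxX pxY pyX pyY MX MY
  have hexp4 : Real.exp (4 * ε) = Real.exp ε * Real.exp ε * Real.exp ε * Real.exp ε := by
    rw [← Real.exp_add, ← Real.exp_add, ← Real.exp_add]; ring_nf
  have hE0 : (0:ℝ) < Real.exp ε := Real.exp_pos _
  have goal' : (nxX * nyY) * (bxX * byY) ≤ (Real.exp (4 * ε) * (nxY * nyX)) * (bxX * byY) := by
    calc (nxX * nyY) * (bxX * byY)
        = (nxX * bxX) * (nyY * byY) := by ring
      _ = (pxX * MX) * (pyY * MY) := by rw [hidxX, hidyY]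
      _ ≤ ((Real.exp ε * pxY) * MX) * ((Real.exp ε * pyX) * MY) := by
          apply mul_le_mul (mul_le_mul_of_nonneg_right hp1 hMX.le)
            (mul_le_mul_of_nonneg_right hp2 hMY.le)
            (mul_nonneg hpyY.le hMY.le)
            (mul_nonneg (mul_nonneg hE0.le hpxY.le) hMX.le)
      _ = (Real.exp ε * Real.exp ε) * ((pxY * MY) * (pyX * MX)) := by ring
      _ = (Real.exp ε * Real.exp ε) * ((nxY * bxY) * (nyX * byX)) := by rw [hidxY, hidyX]
      _ ≤ (Real.exp ε * Real.exp ε) *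
            ((nxY * (Real.exp ε * bxX)) * (nyX * (Real.exp ε * byY))) := by
          apply mul_le_mul_of_nonneg_left _ (mul_nonneg hE0.le hE0.le)
          apply mul_le_mul (mul_le_mul_of_nonneg_left hb1 hNxY.le)
            (mul_le_mul_of_nonneg_left hb2 hNyX.le)
            (mul_nonneg hNyX.le hbyX.le)
            (mul_nonneg hNxY.le (mul_nonneg hE0.le hbxX.le))
      _ = (Real.exp ε * Real.exp ε * Real.exp ε * Real.exp ε) * ((nxY * nyX) * (bxX * byY)) := by
          ring
      _ = (Real.exp (4 * ε) * (nxY * nyX)) * (bxX * byY) := by rw [hexp4]; ring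
  exact le_of_mul_le_mul_right goal' (mul_pos hbxX hbyY)

lemma link_supp {D : S → ℝ} {f : S → Ψ} {O : S → Θ} {x y : Ψ} (h : LinkRel D f O x y) :
    (∃ σ, 0 < D σ ∧ f σ = x) ∧ (∃ σ, 0 < D σ ∧ f σ = y) := by
  obtain ⟨σ, σ', h1, h2, hf1, hf2, -⟩ := h
  exact ⟨⟨σ, h1, hf1⟩, ⟨σ', h2, hf2⟩⟩

lemma adj_supp {D : S → ℝ} {f : S → Ψ} {O : S → Θ} {x y : Ψ}
    (h : (SimpleGraph.fromRel (LinkRel D f O)).Adj x y) :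
    (∃ σ, 0 < D σ ∧ f σ = x) ∧ (∃ σ, 0 < D σ ∧ f σ = y) := by
  obtain ⟨-, hrel | hrel⟩ := h
  · exact link_supp hrel
  · exact (link_supp hrel).symm

lemma walk_supp {D : S → ℝ} {f : S → Ψ} {O : S → Θ} {x y : Ψ}
    (w : (SimpleGraph.fromRel (LinkRel D f O)).Walk x y) :
    x = y ∨ ((∃ σ, 0 < D σ ∧ f σ = x) ∧ (∃ σ, 0 < D σ ∧ f σ = y)) := by
  induction w with
  | nil => exact Or.inl rfl
  | cons h p ih =>
    obtain ⟨hsx, hsz⟩ := adj_supp h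
    rcases ih with rfl | hih
    · exact Or.inr ⟨hsx, hsz⟩
    · exact Or.inr ⟨hsx, hih.2⟩

lemma walk_bound (D : S → ℝ) (hD : IsProb D) (f : S → Ψ) (g : S → G) (O : S → Θ) (C : Θ → Ω)
    {ε : ℝ} (hε0 : 0 ≤ ε) (hε : ε < 3 / 2)
    (hft : FairTreatment D f g O C ε) (hrf : RatFair D f g O C (ε / 5))
    {x y : Ψ} (w : (SimpleGraph.fromRel (LinkRel D f O)).Walk x y) (X Y : G) :
    pr D (fun σ => f σ = x ∧ g σ = X) * pr D (fun σ => f σ = y ∧ g σ = Y)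
      ≤ Real.exp (4 * w.length * ε) *
        (pr D (fun σ => f σ = x ∧ g σ = Y) * pr D (fun σ => f σ = y ∧ g σ = X)) := by
  have hDnn := hD.1
  induction w with
  | nil =>
    rw [SimpleGraph.Walk.length_nil]
    norm_num
    rw [mul_comm]
  | @cons u z v h p ih =>
    have hsz : ∃ σ, 0 < D σ ∧ f σ = z := (adj_supp h).2
    have hNzX : 0 < pr D (fun σ => f σ = z ∧ g σ = X) :=
      supp_N_pos D hDnn f g O C hε0 hft hsz X
    have hNzY : 0 < pr D (fun σ => f σ = z ∧ g σ = Y) :=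
      supp_N_pos D hDnn f g O C hε0 hft hsz Y
    have hedge : pr D (fun σ => f σ = u ∧ g σ = X) * pr D (fun σ => f σ = z ∧ g σ = Y)
        ≤ Real.exp (4 * ε) *
          (pr D (fun σ => f σ = u ∧ g σ = Y) * pr D (fun σ => f σ = z ∧ g σ = X)) := by
      obtain ⟨-, hrel | hrel⟩ := h
      · exact edge_bound D hD f g O C hε0 hε hft hrf hrel X Y
      · linarith [edge_bound D hD f g O C hε0 hε hft hrf hrel Y X]
    have hmul := mul_le_mul hedge ih
      (mul_nonneg (pr_nonneg D hDnn _) (pr_nonneg D hDnn _))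
      (by
        have := mul_nonneg (pr_nonneg D hDnn (fun σ => f σ = u ∧ g σ = Y))
          (pr_nonneg D hDnn (fun σ => f σ = z ∧ g σ = X))
        positivity)
    rw [SimpleGraph.Walk.length_cons]
    apply le_of_mul_le_mul_right _ (mul_pos hNzX hNzY)
    calc (pr D (fun σ => f σ = u ∧ g σ = X) * pr D (fun σ => f σ = v ∧ g σ = Y)) *
          (pr D (fun σ => f σ = z ∧ g σ = X) * pr D (fun σ => f σ = z ∧ g σ = Y))
        = (pr D (fun σ => f σ = u ∧ g σ = X) * pr D (fun σ => f σ = z ∧ g σ = Y)) *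
          (pr D (fun σ => f σ = z ∧ g σ = X) * pr D (fun σ => f σ = v ∧ g σ = Y)) := by ring
      _ ≤ (Real.exp (4 * ε) *
             (pr D (fun σ => f σ = u ∧ g σ = Y) * pr D (fun σ => f σ = z ∧ g σ = X))) *
          (Real.exp (4 * p.length * ε) *
             (pr D (fun σ => f σ = z ∧ g σ = Y) * pr D (fun σ => f σ = v ∧ g σ = X))) := hmul
      _ = Real.exp (4 * ↑(p.length + 1) * ε) *
            (pr D (fun σ => f σ = u ∧ g σ = Y) * pr D (fun σ => f σ = v ∧ g σ = X)) *
          (pr D (fun σ => f σ = z ∧ g σ = X) * pr D (fun σ => f σ = z ∧ g σ = Y)) := by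
          rw [show Real.exp (4 * (↑(p.length + 1) : ℝ) * ε)
              = Real.exp (4 * ε) * Real.exp (4 * ↑p.length * ε) from by
            rw [← Real.exp_add]; congr 1; push_cast; ring]
          ring

lemma reach_bound (D : S → ℝ) (hD : IsProb D) (f : S → Ψ) (g : S → G) (O : S → Θ) (C : Θ → Ω)
    {ε : ℝ} (hε0 : 0 ≤ ε) (hε : ε < 3 / 2)
    (hft : FairTreatment D f g O C ε) (hrf : RatFair D f g O C (ε / 5))
    {x y : Ψ} (h : x = y ∨ (SimpleGraph.fromRel (LinkRel D f O)).Reachable x y) (X Y : G) :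
    pr D (fun σ => f σ = x ∧ g σ = X) * pr D (fun σ => f σ = y ∧ g σ = Y)
      ≤ Real.exp (4 * ((Fintype.card Ψ : ℝ) - 1) * ε) *
        (pr D (fun σ => f σ = x ∧ g σ = Y) * pr D (fun σ => f σ = y ∧ g σ = X)) := by
  have hDnn := hD.1
  have hcard : 1 ≤ Fintype.card Ψ := Fintype.card_pos_iff.mpr ⟨x⟩
  have hcard' : (0:ℝ) ≤ (Fintype.card Ψ : ℝ) - 1 := by
    have : (1:ℝ) ≤ (Fintype.card Ψ : ℝ) := by exact_mod_cast hcard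
    linarith
  rcases h with rfl | hr
  · have hK1 : 1 ≤ Real.exp (4 * ((Fintype.card Ψ : ℝ) - 1) * ε) :=
      Real.one_le_exp (by positivity)
    calc pr D (fun σ => f σ = x ∧ g σ = X) * pr D (fun σ => f σ = x ∧ g σ = Y)
        = 1 * (pr D (fun σ => f σ = x ∧ g σ = Y) * pr D (fun σ => f σ = x ∧ g σ = X)) := by ring
      _ ≤ _ := mul_le_mul_of_nonneg_right hK1
          (mul_nonneg (pr_nonneg D hDnn _) (pr_nonneg D hDnn _))
  · obtain ⟨w⟩ := hr
    set p := w.toPath with hp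
    have hlen : p.1.length < Fintype.card Ψ := p.2.length_lt
    refine le_trans (walk_bound D hD f g O C hε0 hε hft hrf p.1 X Y)
      (mul_le_mul_of_nonneg_right (Real.exp_le_exp.2 ?_)
        (mul_nonneg (pr_nonneg D hDnn _) (pr_nonneg D hDnn _)))
    have hlen' : (p.1.length : ℝ) ≤ (Fintype.card Ψ : ℝ) - 1 := by
      have : (p.1.length : ℝ) + 1 ≤ (Fintype.card Ψ : ℝ) := by exact_mod_cast hlen
      linarith
    nlinarith [mul_le_mul_of_nonneg_right hlen' hε0]

lemma pr_false (D : S → ℝ) {E : S → Prop} (h : ∀ σ, ¬ E σ) : pr D E = 0 := by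
  unfold pr
  exact Finset.sum_eq_zero fun σ _ => if_neg (h σ)

lemma pr_zero_of (D : S → ℝ) {E : S → Prop} (h : ∀ σ, E σ → D σ = 0) : pr D E = 0 := by
  unfold pr
  apply Finset.sum_eq_zero
  intro σ _
  by_cases hE : E σ
  · rw [if_pos hE]; exact h σ hE
  · rw [if_neg hE]

lemma pr_part_sum {m : ℕ} (D : S → ℝ) (f : S → Ψ) (g : S → G) (P : Ψ → Fin m)
    (i : Fin m) (X : G) :
    pr D (fun σ => P (f σ) = i ∧ g σ = X)
      = ∑ x ∈ univ.filter (fun x => P x = i), pr D (fun σ => f σ = x ∧ g σ = X) := by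
  rw [← pr_fiber_sum D f (fun σ => P (f σ) = i ∧ g σ = X), Finset.sum_filter]
  apply Finset.sum_congr rfl
  intro x _
  by_cases hP : P x = i
  · rw [if_pos hP]
    apply pr_congr
    intro σ
    constructor
    · rintro ⟨h1, -, h3⟩; exact ⟨h1, h3⟩
    · rintro ⟨h1, h3⟩; exact ⟨h1, by rw [h1]; exact hP, h3⟩
  · rw [if_neg hP]
    apply pr_false
    rintro σ ⟨h1, h2, -⟩
    exact hP (by rw [← h1]; exact h2)

end Main

def partSetoid {S Ψ Θ : Type} [Fintype S] (D : S → ℝ) (f : S → Ψ) (O : S → Θ) : Setoid Ψ :=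
  ⟨fun a b => a = b ∨ (SimpleGraph.fromRel (LinkRel D f O)).Reachable a b,
    ⟨fun _ => Or.inl rfl, fun h => h.imp Eq.symm SimpleGraph.Reachable.symm, by
      rintro a b c (rfl | hab) (rfl | hbc)
      · exact Or.inl rfl
      · exact Or.inr hbc
      · exact Or.inr hab
      · exact Or.inr (hab.trans hbc)⟩⟩


set_option maxHeartbeats 1000000 in
theorem main_theorem_direction_two {S Ψ G Θ Ω : Type}
    [Fintype S] [Fintype Ψ] [Fintype G] [Fintype Ω]
    (D : S → ℝ) (hD : IsProb D) (f : S → Ψ) (g : S → G) (O : S → Θ) (C : Θ → Ω)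
    (ε : ℝ) (hε0 : 0 ≤ ε) (hε : ε < 3 / 2)
    (hft : FairTreatment D f g O C ε) (hrf : RatFair D f g O C (ε / 5)) :
    ∃ (m : ℕ) (P : Ψ → Fin m), Function.Surjective P ∧
      -- (1): base rates conditioned on each part are 4(k−1)ε-close between groups
      (∀ (i : Fin m) (c : Ψ), P c = i → ∀ X Y : G,
        mdist (cpr D (fun σ => f σ = c) (fun σ => P (f σ) = i ∧ g σ = X))
              (cpr D (fun σ => f σ = c) (fun σ => P (f σ) = i ∧ g σ = Y))
          ≤ ENNReal.ofReal (4 * ((Fintype.card Ψ : ℝ) - 1) * ε)) ∧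
      -- (2): observables of distinct parts have disjoint supports
      (∀ σ σ', 0 < D σ → 0 < D σ' → P (f σ) ≠ P (f σ') → O σ ≠ O σ') := by
  classical
  have hDnn := hD.1
  set st := partSetoid D f O with hst
  haveI : Fintype (Quotient st) :=
    Fintype.ofSurjective (Quotient.mk st) fun q => ⟨q.out, q.out_eq⟩
  set eqv : Quotient st ≃ Fin (Fintype.card (Quotient st)) := Fintype.equivFin _ with heqv
  refine ⟨Fintype.card (Quotient st), fun c => eqv (Quotient.mk st c), ?_, ?_, ?_⟩
  · intro i
    refine ⟨(eqv.symm i).out, ?_⟩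
    show eqv (Quotient.mk st (eqv.symm i).out) = i
    rw [show Quotient.mk st (eqv.symm i).out = eqv.symm i from Quotient.out_eq _,
      Equiv.apply_symm_apply]
  · -- condition (1)
    intro i c hc X Y
    have hPiff : ∀ x : Ψ, eqv (Quotient.mk st x) = i ↔
        (x = c ∨ (SimpleGraph.fromRel (LinkRel D f O)).Reachable x c) := by
      intro x
      rw [← hc]
      constructor
      · intro h
        exact Quotient.exact (eqv.injective h)
      · intro h
        exact congrArg eqv (Quotient.sound h)
    by_cases hsupp : ∃ σ, 0 < D σ ∧ f σ = c
    · -- supported case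
      set T := univ.filter (fun x : Ψ => eqv (Quotient.mk st x) = i) with hT
      have hcT : c ∈ T := by
        rw [hT, Finset.mem_filter]
        exact ⟨Finset.mem_univ c, hc⟩
      have hsuppT : ∀ x ∈ T, ∃ σ, 0 < D σ ∧ f σ = x := by
        intro x hx
        rcases (hPiff x).1 (Finset.mem_filter.1 hx).2 with rfl | hr
        · exact hsupp
        · obtain ⟨w⟩ := hr
          rcases walk_supp w with rfl | hs
          · exact hsupp
          · exact hs.1
      have hNpos : ∀ x ∈ T, ∀ Z : G, 0 < pr D (fun σ => f σ = x ∧ g σ = Z) :=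
        fun x hx Z => supp_N_pos D hDnn f g O C hε0 hft (hsuppT x hx) Z
      have hbound : ∀ x ∈ T, ∀ (X' Y' : G),
          pr D (fun σ => f σ = c ∧ g σ = X') * pr D (fun σ => f σ = x ∧ g σ = Y')
          ≤ Real.exp (4 * ((Fintype.card Ψ : ℝ) - 1) * ε) *
            (pr D (fun σ => f σ = c ∧ g σ = Y') * pr D (fun σ => f σ = x ∧ g σ = X')) := by
        intro x hx X' Y'
        apply reach_bound D hD f g O C hε0 hε hft hrf
        exact ((hPiff x).1 (Finset.mem_filter.1 hx).2).imp Eq.symm SimpleGraph.Reachable.symm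
      have hden : ∀ Z : G,
          pr D (fun σ => eqv (Quotient.mk st (f σ)) = i ∧ g σ = Z)
            = ∑ x ∈ T, pr D (fun σ => f σ = x ∧ g σ = Z) := fun Z =>
        pr_part_sum D f g (fun c => eqv (Quotient.mk st c)) i Z
      have hdenpos : ∀ Z : G, 0 < ∑ x ∈ T, pr D (fun σ => f σ = x ∧ g σ = Z) := by
        intro Z
        exact Finset.sum_pos' (fun x _ => pr_nonneg D hDnn _) ⟨c, hcT, hNpos c hcT Z⟩
      have hnum : ∀ Z : G,
          pr D (fun σ => f σ = c ∧ (eqv (Quotient.mk st (f σ)) = i ∧ g σ = Z))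
            = pr D (fun σ => f σ = c ∧ g σ = Z) := by
        intro Z
        apply pr_congr
        intro σ
        constructor
        · rintro ⟨h1, -, h3⟩; exact ⟨h1, h3⟩
        · rintro ⟨h1, h3⟩; exact ⟨h1, by rw [h1]; exact hc, h3⟩
      have hcprpos : ∀ Z : G,
          0 < cpr D (fun σ => f σ = c) (fun σ => eqv (Quotient.mk st (f σ)) = i ∧ g σ = Z) := by
        intro Z
        unfold cpr
        rw [hnum Z, hden Z]
        exact div_pos (hNpos c hcT Z) (hdenpos Z)
      have hq : ∀ (X' Y' : G),
          cpr D (fun σ => f σ = c) (fun σ => eqv (Quotient.mk st (f σ)) = i ∧ g σ = X')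
          ≤ Real.exp (4 * ((Fintype.card Ψ : ℝ) - 1) * ε) *
            cpr D (fun σ => f σ = c) (fun σ => eqv (Quotient.mk st (f σ)) = i ∧ g σ = Y') := by
        intro X' Y'
        unfold cpr
        rw [hnum X', hnum Y', hden X', hden Y', ← mul_div_assoc,
          div_le_div_iff₀ (hdenpos X') (hdenpos Y'), Finset.mul_sum, Finset.mul_sum]
        apply Finset.sum_le_sum
        intro x hx
        have h := hbound x hx X' Y'
        set K := Real.exp (4 * ((Fintype.card Ψ : ℝ) - 1) * ε)
        linarith [h]
      exact mdist_le_of_bounds (hcprpos X) (hcprpos Y) (hq X Y) (hq Y X)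
    · -- unsupported: singleton part, denominators vanish
      have hzero : ∀ Z : G,
          pr D (fun σ => eqv (Quotient.mk st (f σ)) = i ∧ g σ = Z) = 0 := by
        intro Z
        apply pr_zero_of
        rintro σ ⟨h1, -⟩
        rcases (hDnn σ).lt_or_eq with hσ | hσ
        · exfalso
          rcases (hPiff (f σ)).1 h1 with h2 | h2
          · exact hsupp ⟨σ, hσ, h2⟩
          · obtain ⟨w⟩ := h2
            rcases walk_supp w with h3 | h3
            · exact hsupp ⟨σ, hσ, h3⟩
            · exact hsupp h3.2
        · exact hσ.symm
      unfold cpr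
      rw [hzero X, hzero Y, div_zero, div_zero]
      rw [show mdist 0 0 = 0 from by unfold mdist; rw [if_pos ⟨rfl, rfl⟩]]
      exact zero_le
  · -- condition (2)
    intro σ σ' hσ hσ' hne hOeq
    apply hne
    apply congrArg eqv
    apply Quotient.sound
    by_cases hf : f σ = f σ'
    · exact Or.inl hf
    · refine Or.inr (SimpleGraph.Adj.reachable ?_)
      rw [SimpleGraph.fromRel_adj]
      exact ⟨hf, Or.inl ⟨σ, σ', hσ, hσ', rfl, rfl, hOeq⟩⟩
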